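/- For the bilinear game f(x,y) = xᵀCy with C a full-rank matrix, the gradient descent-ascent update (x_{k+1}, y_{k+1}) = (x_k - η C y_k, y_k + η Cᵀ x_k) satisfies ‖(x_{k+1}, y_{k+1})‖² ≥ (1 + η² λ_min(C Cᵀ)) ‖(x_k, y_k)‖² for every step size η > 0. -/

import Mathlib

open Matrix Finset

lemma dot_expand {M : ℕ} (b : OrthonormalBasis (Fin M) ℝ (EuclideanSpace ℝ (Fin M)))
    (u w : Fin M → ℝ) :
    u ⬝ᵥ w = ∑ i, ((b i : Fin M → ℝ) ⬝ᵥ u) * ((b i : Fin M → ℝ) ⬝ᵥ w) := by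
  have h : (∑ i, (u ⬝ᵥ (b i : Fin M → ℝ)) * ((b i : Fin M → ℝ) ⬝ᵥ w)) = u ⬝ᵥ w := by
    have h0 : ∑ i, ((b i : Fin M → ℝ) ⬝ᵥ u) * (w ⬝ᵥ (b i : Fin M → ℝ)) = w ⬝ᵥ u :=
      b.sum_inner_mul_inner ((EuclideanSpace.equiv (Fin M) ℝ).symm u)
        ((EuclideanSpace.equiv (Fin M) ℝ).symm w)
    rw [dotProduct_comm u w, ← h0]
    exact Finset.sum_congr rfl fun i _ => by rw [dotProduct_comm u, dotProduct_comm w]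
  rw [← h]
  exact Finset.sum_congr rfl fun i _ => by rw [dotProduct_comm u]


/-- For the bilinear game `f(x,y) = xᵀCy` with `C` full rank, the GDA update
`x' = x - η C y`, `y' = y + η Cᵀ x` satisfies
`‖(x',y')‖² ≥ (1 + η² λ_min(CCᵀ)) ‖(x,y)‖²` for every `η > 0`. -/
theorem gda_bilinear_norm_growth (M : ℕ) (C : Matrix (Fin M) (Fin M) ℝ)
    (hC : IsUnit C.det) (η : ℝ) (hη : 0 < η) (x y : Fin M → ℝ)
    (x' y' : Fin M → ℝ)
    (hx' : x' = x - η • C.mulVec y)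
    (hy' : y' = y + η • Cᵀ.mulVec x) :
    (1 + η ^ 2 * ⨅ i, (Matrix.isHermitian_mul_conjTranspose_self C).eigenvalues i) *
        ((∑ i, x i ^ 2) + ∑ i, y i ^ 2) ≤
      (∑ i, x' i ^ 2) + ∑ i, y' i ^ 2 := by
  classical
  rcases Nat.eq_zero_or_pos M with hM | hM
  · subst hM; simp
  have : Nonempty (Fin M) := Fin.pos_iff_nonempty.mp hM
  have hA := Matrix.isHermitian_mul_conjTranspose_self C
  set A : Matrix (Fin M) (Fin M) ℝ := C * Cᴴ with hAdef
  set μ : Fin M → ℝ := hA.eigenvalues with hμ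
  set lam : ℝ := ⨅ i, μ i with hlam
  set b := hA.eigenvectorBasis with hb
  have hCT : Cᴴ = Cᵀ := Matrix.conjTranspose_eq_transpose_of_trivial C
  have hAT : Aᵀ = A := by
    rw [← Matrix.conjTranspose_eq_transpose_of_trivial]; exact hA
  have hmu_nonneg : ∀ i, 0 ≤ μ i := fun i =>
    Matrix.eigenvalues_self_mul_conjTranspose_nonneg C i
  have hlam_le : ∀ i, lam ≤ μ i := fun i =>
    ciInf_le (Set.Finite.bddBelow (Set.finite_range μ)) i
  -- symmetric action of A on eigenvectors
  have hdotA : ∀ (i : Fin M) (z : Fin M → ℝ),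
      (b i : Fin M → ℝ) ⬝ᵥ (A *ᵥ z) = μ i * ((b i : Fin M → ℝ) ⬝ᵥ z) := by
    intro i z
    have hm : A *ᵥ (b i : Fin M → ℝ) = μ i • (b i : Fin M → ℝ) :=
      hA.mulVec_eigenvectorBasis i
    rw [Matrix.dotProduct_mulVec, ← hAT, Matrix.vecMul_transpose, hm,
      smul_dotProduct, smul_eq_mul]
  have key0 : ∀ z : Fin M → ℝ, z ⬝ᵥ z = ∑ i, ((b i : Fin M → ℝ) ⬝ᵥ z)^2 := by
    intro z; rw [dot_expand b z z]; exact Finset.sum_congr rfl fun i _ => (sq _).symm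
  have key1 : ∀ z : Fin M → ℝ,
      z ⬝ᵥ (A *ᵥ z) = ∑ i, μ i * ((b i : Fin M → ℝ) ⬝ᵥ z)^2 := by
    intro z; rw [dot_expand b z (A *ᵥ z)]
    exact Finset.sum_congr rfl fun i _ => by rw [hdotA]; ring
  have key2 : ∀ z : Fin M → ℝ,
      (A *ᵥ z) ⬝ᵥ (A *ᵥ z) = ∑ i, (μ i)^2 * ((b i : Fin M → ℝ) ⬝ᵥ z)^2 := by
    intro z; rw [dot_expand b (A *ᵥ z) (A *ᵥ z)]
    exact Finset.sum_congr rfl fun i _ => by rw [hdotA]; ring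
  -- bound 1
  have hquad : ∀ z : Fin M → ℝ, (Cᵀ *ᵥ z) ⬝ᵥ (Cᵀ *ᵥ z) = z ⬝ᵥ (A *ᵥ z) := by
    intro z
    rw [hAdef, hCT, ← Matrix.mulVec_mulVec, Matrix.dotProduct_mulVec z,
      ← Matrix.mulVec_transpose]
  have bound1 : lam * (x ⬝ᵥ x) ≤ (Cᵀ *ᵥ x) ⬝ᵥ (Cᵀ *ᵥ x) := by
    rw [hquad, key1, key0, Finset.mul_sum]
    exact Finset.sum_le_sum fun i _ =>
      mul_le_mul_of_nonneg_right (hlam_le i) (sq_nonneg _)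
  -- bound 2, via invertibility
  have hCinv := C.nonsing_inv_mul hC
  set z : Fin M → ℝ := (C⁻¹)ᵀ *ᵥ y with hz
  have hyz : Cᵀ *ᵥ z = y := by
    rw [hz, Matrix.mulVec_mulVec, ← Matrix.transpose_mul, hCinv, Matrix.transpose_one,
      Matrix.one_mulVec]
  have hCy : C *ᵥ y = A *ᵥ z := by
    conv_lhs => rw [← hyz]
    rw [Matrix.mulVec_mulVec, hAdef, hCT]
  have bound2 : lam * (y ⬝ᵥ y) ≤ (C *ᵥ y) ⬝ᵥ (C *ᵥ y) := by
    rw [hCy, ← hyz, hquad, key1, key2, Finset.mul_sum]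
    refine Finset.sum_le_sum fun i _ => ?_
    have h1 : 0 ≤ μ i * ((b i : Fin M → ℝ) ⬝ᵥ z)^2 :=
      mul_nonneg (hmu_nonneg i) (sq_nonneg _)
    calc lam * (μ i * ((b i : Fin M → ℝ) ⬝ᵥ z)^2)
        ≤ μ i * (μ i * ((b i : Fin M → ℝ) ⬝ᵥ z)^2) :=
          mul_le_mul_of_nonneg_right (hlam_le i) h1
      _ = (μ i)^2 * ((b i : Fin M → ℝ) ⬝ᵥ z)^2 := by ring
  -- expansion of the update
  have hsum : ∀ v : Fin M → ℝ, (∑ i, v i ^ 2) = v ⬝ᵥ v := by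
    intro v; simp [dotProduct, sq]
  have hcross : y ⬝ᵥ (Cᵀ *ᵥ x) = x ⬝ᵥ (C *ᵥ y) := by
    rw [Matrix.dotProduct_mulVec y, Matrix.vecMul_transpose, dotProduct_comm]
  have e1 : x' ⬝ᵥ x' = x ⬝ᵥ x - 2*η*(x ⬝ᵥ (C *ᵥ y)) + η^2 * ((C *ᵥ y) ⬝ᵥ (C *ᵥ y)) := by
    subst hx'
    simp only [sub_dotProduct, dotProduct_sub, smul_dotProduct,
      dotProduct_smul, smul_eq_mul, dotProduct_comm (C *ᵥ y) x]
    ring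
  have e2 : y' ⬝ᵥ y' = y ⬝ᵥ y + 2*η*(x ⬝ᵥ (C *ᵥ y)) + η^2 * ((Cᵀ *ᵥ x) ⬝ᵥ (Cᵀ *ᵥ x)) := by
    subst hy'
    simp only [add_dotProduct, dotProduct_add, smul_dotProduct,
      dotProduct_smul, smul_eq_mul, dotProduct_comm (Cᵀ *ᵥ x) y, hcross]
    ring
  rw [hsum x, hsum y, hsum x', hsum y', e1, e2]
  nlinarith [bound1, bound2, sq_nonneg η]
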